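/- Let k, k' : [0,1] → ℝ be continuous and let N, N' > 1. Let f, g, h : [0,1] → ℝ be solutions on [0,1] of f'' + (k/(N−1))f = 0, g'' + (k'/(N'−1))g = 0 and h'' + ((k+k')/(N+N'−1))h = 0 respectively, each with value 0 at 0 and value 1 at 1, and each positive on (0,1]. Then t·f(t)^{N−1}·g(t)^{N'−1} ≥ h(t)^{N+N'−1} for all t ∈ [0,1]. (Multiplicativity inequality τ_{k,N}^{(t)}(θ)^N · τ_{k',N'}^{(t)}(θ)^{N'} ≥ τ_{k+k',N+N'}^{(t)}(θ)^{N+N'} for the modified distortion coefficients τ_{k,N}^{(t)} = t^{1/N}·σ_{k,N−1}^{(t)}{}^{(N−1)/N}.) -/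

import Mathlib

open Set

/-- `u` is a (twice continuously differentiable) solution of `u'' + κ·u = 0` on the set `s`,
with first and second derivative functions `u'` and `u''`. -/
def SturmSol (κ u u' u'' : ℝ → ℝ) (s : Set ℝ) : Prop :=
  (∀ t ∈ s, HasDerivWithinAt u (u' t) s t) ∧
  (∀ t ∈ s, HasDerivWithinAt u' (u'' t) s t) ∧
  ContinuousOn u'' s ∧
  (∀ t ∈ s, u'' t + κ t * u t = 0)

open Filter Topology


lemma cs_ineq (a b x y z : ℝ) (ha : 0 ≤ a) (hb : 0 ≤ b) :
    (x + a*y + b*z)^2 ≤ (1 + a + b) * (x^2 + a*y^2 + b*z^2) := by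
  nlinarith [mul_nonneg ha (sq_nonneg (x - y)), mul_nonneg hb (sq_nonneg (x - z)),
    mul_nonneg (mul_nonneg ha hb) (sq_nonneg (y - z))]

set_option maxHeartbeats 1000000 in
lemma alg1 (a b L t F F1 F2 G G1 G2 H H1 H2 Wv kk kk' : ℝ)
    (ha : a ≠ 0) (hb : b ≠ 0) (hLne : L ≠ 0)
    (ht : t ≠ 0) (hF : F ≠ 0) (hG : G ≠ 0)
    (eF : F2 = -(kk / a * F)) (eG : G2 = -(kk' / b * G)) (eH : H2 = -((kk + kk') / L * H)) :
    H2 * Wv + H1 * ((1/t + a*(F1/F) + b*(G1/G))/L * Wv) -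
      (H1 * ((1/t + a*(F1/F) + b*(G1/G))/L * Wv) +
        H * ((-(1/t^2) + a*((F2*F - F1*F1)/F^2) + b*((G2*G - G1*G1)/G^2))/L * Wv +
          (1/t + a*(F1/F) + b*(G1/G))/L * ((1/t + a*(F1/F) + b*(G1/G))/L * Wv)))
    = H * Wv * ((L * ((1/t)^2 + a*(F1/F)^2 + b*(G1/G)^2)
        - (1/t + a*(F1/F) + b*(G1/G))^2)/L^2) := by
  subst eF eG eH
  field_simp
  ring

set_option maxHeartbeats 1000000 in
lemma alg2 (a b L t F F1 G G1 X A B : ℝ)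
    (ht : t ≠ 0) (hF : F ≠ 0) (hG : G ≠ 0) (hL : L ≠ 0) :
    (1/t + a*(F1/F) + b*(G1/G))/L * (X * A * B) =
      (1/L * (X/t) * A + X * (F1 * (a/L) * (A/F))) * B + X * A * (G1 * (b/L) * (B/G)) := by
  field_simp

set_option maxHeartbeats 1000000 in
lemma alg3 (a b L t F F1 G G1 H H1 Φ : ℝ)
    (ht : t ≠ 0) (hF : F ≠ 0) (hG : G ≠ 0) (hL : L ≠ 0) :
    H1 * (t * Φ) - H * ((1/t + a*(F1/F) + b*(G1/G))/L * (t * Φ))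
      = Φ * (t * H1 - H * ((1 + a*(F1/(F/t)) + b*(G1/(G/t)))/L)) := by
  have hFt : F / t ≠ 0 := div_ne_zero hF ht
  field_simp

lemma slope_tendsto (u u₁ : ℝ → ℝ)
    (hu : ∀ t ∈ Icc (0:ℝ) 1, HasDerivWithinAt u (u₁ t) (Icc 0 1) t)
    (h0 : u 0 = 0) :
    Tendsto (fun t => u t / t) (𝓝[Ioc (0:ℝ) 1] 0) (𝓝 (u₁ 0)) := by
  have h := (hu 0 (by norm_num)).mono (Ioc_subset_Icc_self)
  have h2 := hasDerivWithinAt_iff_tendsto_slope.mp h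
  have he : Ioc (0:ℝ) 1 \ {0} = Ioc 0 1 := by
    ext x; simp only [mem_diff, mem_Ioc, mem_singleton_iff]
    exact ⟨fun ⟨h, _⟩ => h, fun h => ⟨h, ne_of_gt h.1⟩⟩
  rw [he] at h2
  refine h2.congr (fun t => ?_)
  simp [slope_def_field, h0]

lemma deriv_nonneg_at_zero (u u₁ : ℝ → ℝ)
    (hu : ∀ t ∈ Icc (0:ℝ) 1, HasDerivWithinAt u (u₁ t) (Icc 0 1) t)
    (h0 : u 0 = 0) (hpos : ∀ t ∈ Ioc (0:ℝ) 1, 0 < u t) : 0 ≤ u₁ 0 := by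
  have h2 := slope_tendsto u u₁ hu h0
  have hne : (𝓝[Ioc (0:ℝ) 1] 0).NeBot := by
    rw [nhdsWithin_Ioc_eq_nhdsGT one_pos]; infer_instance
  refine ge_of_tendsto h2 ?_
  filter_upwards [self_mem_nhdsWithin] with t ht
  exact le_of_lt (div_pos (hpos t ht) ht.1)

lemma deriv_pos_at_zero (κ u u₁ u₂ : ℝ → ℝ) (hκ : ContinuousOn κ (Icc 0 1))
    (hu : ∀ t ∈ Icc (0:ℝ) 1, HasDerivWithinAt u (u₁ t) (Icc 0 1) t)
    (hu₁ : ∀ t ∈ Icc (0:ℝ) 1, HasDerivWithinAt u₁ (u₂ t) (Icc 0 1) t)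
    (hode : ∀ t ∈ Icc (0:ℝ) 1, u₂ t = -(κ t * u t))
    (h0 : u 0 = 0) (h1 : u 1 = 1) (hpos : ∀ t ∈ Ioc (0:ℝ) 1, 0 < u t) : 0 < u₁ 0 := by
  rcases lt_or_eq_of_le (deriv_nonneg_at_zero u u₁ hu h0 hpos) with hlt | heq
  · exact hlt
  exfalso
  -- ODE uniqueness: (u, u₁) solves a linear system with zero initial data
  obtain ⟨C, hC⟩ := (isCompact_Icc).exists_bound_of_continuousOn hκ
  set M : ℝ := max C 0 with hM
  have hM0 : 0 ≤ M := le_max_right _ _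
  set π : ℝ → ℝ := fun t => max 0 (min t 1) with hπ
  have hπmem : ∀ t, π t ∈ Icc (0:ℝ) 1 := fun t =>
    ⟨le_max_left _ _, max_le (by norm_num) (min_le_right _ _)⟩
  have hπeq : ∀ t ∈ Icc (0:ℝ) 1, π t = t := fun t ht => by
    simp only [hπ]; rw [min_eq_left ht.2, max_eq_right ht.1]
  set v : ℝ → ℝ × ℝ → ℝ × ℝ := fun t p => (p.2, -(κ (π t) * p.1)) with hv
  have hbound : ∀ t, |κ (π t)| ≤ M := by
    intro t
    have := hC _ (hπmem t)
    rw [Real.norm_eq_abs] at this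
    exact le_trans this (le_max_left _ _)
  set K : NNReal := ⟨M + 1, by positivity⟩ with hK
  have hlip : ∀ t, LipschitzWith K (v t) := by
    intro t
    apply LipschitzWith.of_dist_le_mul
    intro p q
    have hKM : (K : ℝ) = M + 1 := rfl
    rw [hKM, Prod.dist_eq, Prod.dist_eq]
    have h1d : dist p.2 q.2 ≤ (M+1) * max (dist p.1 q.1) (dist p.2 q.2) := by
      nlinarith [le_max_right (dist p.1 q.1) (dist p.2 q.2), dist_nonneg (x := p.2) (y := q.2),
        le_max_left (dist p.1 q.1) (dist p.2 q.2), dist_nonneg (x := p.1) (y := q.1)]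
    have h2d : dist (-(κ (π t) * p.1)) (-(κ (π t) * q.1)) ≤
        (M+1) * max (dist p.1 q.1) (dist p.2 q.2) := by
      rw [Real.dist_eq, Real.dist_eq]
      have e1 : -(κ (π t) * p.1) - -(κ (π t) * q.1) = κ (π t) * (q.1 - p.1) := by ring
      rw [e1, abs_mul, abs_sub_comm q.1 p.1]
      have hb := hbound t
      nlinarith [abs_nonneg (p.1 - q.1), le_max_left (|p.1 - q.1|) (dist p.2 q.2),
        abs_nonneg (κ (π t)), le_max_right (|p.1 - q.1|) (dist p.2 q.2),
        dist_nonneg (x := p.2) (y := q.2)]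
    exact max_le h1d h2d
  set F : ℝ → ℝ × ℝ := fun t => (u t, u₁ t) with hF
  have hFc : ContinuousOn F (Icc 0 1) :=
    ContinuousOn.prodMk (fun t ht => (hu t ht).continuousWithinAt)
      (fun t ht => (hu₁ t ht).continuousWithinAt)
  have hIci : ∀ t ∈ Ico (0:ℝ) 1, Icc (0:ℝ) 1 ∈ 𝓝[Ici t] t := by
    intro t ht
    refine mem_nhdsWithin.mpr ⟨Iio 1, isOpen_Iio, ht.2, ?_⟩
    rintro x ⟨hx1, hx2⟩
    exact ⟨le_trans ht.1 hx2, le_of_lt hx1⟩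
  have hF' : ∀ t ∈ Ico (0:ℝ) 1, HasDerivWithinAt F (v t (F t)) (Ici t) t := by
    intro t ht
    have htI : t ∈ Icc (0:ℝ) 1 := ⟨ht.1, le_of_lt ht.2⟩
    have := ((hu t htI).prodMk (hu₁ t htI)).mono_of_mem_nhdsWithin (hIci t ht)
    refine this.congr_deriv ?_
    simp only [hv, hF, hπeq t htI]
    exact Prod.ext rfl (by rw [hode t htI])
  have hG' : ∀ t ∈ Ico (0:ℝ) 1, HasDerivWithinAt (fun _ : ℝ => ((0:ℝ),(0:ℝ)))
      (v t ((0:ℝ),(0:ℝ))) (Ici t) t := by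
    intro t ht
    have : v t ((0:ℝ),(0:ℝ)) = (0, 0) := by simp [hv]
    rw [this]
    exact (hasDerivWithinAt_const t _ _).congr_deriv rfl
  have huniq := ODE_solution_unique (v := v) hlip hFc hF'
    (continuousOn_const) hG' (by simp [hF, h0, ← heq])
  have := huniq (right_mem_Icc.mpr zero_le_one)
  simp only [hF, Prod.mk.injEq] at this
  rw [h1] at this
  exact one_ne_zero this.1

set_option maxHeartbeats 2000000 in
theorem main_thm
    (k k' : ℝ → ℝ)
    (hk : ContinuousOn k (Icc 0 1)) (hk' : ContinuousOn k' (Icc 0 1))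
    (N N' : ℝ) (hN : 1 < N) (hN' : 1 < N')
    (f f₁ f₂ g g₁ g₂ h h₁ h₂ : ℝ → ℝ)
    (hfd : ∀ t ∈ Icc (0:ℝ) 1, HasDerivWithinAt f (f₁ t) (Icc 0 1) t)
    (hfd₁ : ∀ t ∈ Icc (0:ℝ) 1, HasDerivWithinAt f₁ (f₂ t) (Icc 0 1) t)
    (hfode : ∀ t ∈ Icc (0:ℝ) 1, f₂ t + (k t / (N-1)) * f t = 0)
    (hgd : ∀ t ∈ Icc (0:ℝ) 1, HasDerivWithinAt g (g₁ t) (Icc 0 1) t)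
    (hgd₁ : ∀ t ∈ Icc (0:ℝ) 1, HasDerivWithinAt g₁ (g₂ t) (Icc 0 1) t)
    (hgode : ∀ t ∈ Icc (0:ℝ) 1, g₂ t + (k' t / (N'-1)) * g t = 0)
    (hhd : ∀ t ∈ Icc (0:ℝ) 1, HasDerivWithinAt h (h₁ t) (Icc 0 1) t)
    (hhd₁ : ∀ t ∈ Icc (0:ℝ) 1, HasDerivWithinAt h₁ (h₂ t) (Icc 0 1) t)
    (hhode : ∀ t ∈ Icc (0:ℝ) 1, h₂ t + ((k t + k' t) / (N+N'-1)) * h t = 0)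
    (hf0 : f 0 = 0) (hf1 : f 1 = 1) (hfpos : ∀ t ∈ Ioc (0:ℝ) 1, 0 < f t)
    (hg0 : g 0 = 0) (hg1 : g 1 = 1) (hgpos : ∀ t ∈ Ioc (0:ℝ) 1, 0 < g t)
    (hh0 : h 0 = 0) (hh1 : h 1 = 1) (hhpos : ∀ t ∈ Ioc (0:ℝ) 1, 0 < h t) :
    ∀ t ∈ Icc (0:ℝ) 1, h t ^ (N + N' - 1) ≤ t * f t ^ (N - 1) * g t ^ (N' - 1) := by
  have hα : (0:ℝ) < N - 1 := by linarith
  have hβ : (0:ℝ) < N' - 1 := by linarith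
  set L : ℝ := N + N' - 1 with hLdef
  have hL : 0 < L := by simp only [hLdef]; linarith
  have hLne : L ≠ 0 := hL.ne'
  have hLsum : L = 1 + (N - 1) + (N' - 1) := by simp only [hLdef]; ring
  have mkD : ∀ (u : ℝ → ℝ) (u' : ℝ → ℝ),
      (∀ t ∈ Icc (0:ℝ) 1, HasDerivWithinAt u (u' t) (Icc 0 1) t) →
      ∀ t ∈ Ioo (0:ℝ) 1, HasDerivAt u (u' t) t := fun u u' hu t ht =>
    (hu t (Ioo_subset_Icc_self ht)).hasDerivAt (Icc_mem_nhds ht.1 ht.2)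
  have hfD := mkD f f₁ hfd
  have hfD₁ := mkD f₁ f₂ hfd₁
  have hgD := mkD g g₁ hgd
  have hgD₁ := mkD g₁ g₂ hgd₁
  have hhD := mkD h h₁ hhd
  have hhD₁ := mkD h₁ h₂ hhd₁
  set P : ℝ → ℝ := fun t => (1/t + (N-1) * (f₁ t / f t) + (N'-1) * (g₁ t / g t)) / L with hPdef
  set Pd : ℝ → ℝ := fun t => (-(1/t^2) + (N-1) * ((f₂ t * f t - f₁ t * f₁ t)/(f t)^2)
      + (N'-1) * ((g₂ t * g t - g₁ t * g₁ t)/(g t)^2)) / L with hPddef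
  set w : ℝ → ℝ := fun t => t ^ (1/L) * f t ^ ((N-1)/L) * g t ^ ((N'-1)/L) with hwdef
  set W : ℝ → ℝ := fun t => h₁ t * w t - h t * (P t * w t) with hWdef
  have hwpos : ∀ t ∈ Ioc (0:ℝ) 1, 0 < w t := by
    intro t ht
    simp only [hwdef]
    exact mul_pos (mul_pos (Real.rpow_pos_of_pos ht.1 _)
      (Real.rpow_pos_of_pos (hfpos t ht) _)) (Real.rpow_pos_of_pos (hgpos t ht) _)
  -- derivative of w
  have hw' : ∀ t ∈ Ioo (0:ℝ) 1, HasDerivAt w (P t * w t) t := by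
    intro t ht
    have htI : t ∈ Ioc (0:ℝ) 1 := ⟨ht.1, ht.2.le⟩
    have htp := ht.1
    have hft := hfpos t htI
    have hgt := hgpos t htI
    have d1 : HasDerivAt (fun s : ℝ => s ^ (1/L)) (1/L * t ^ (1/L - 1)) t :=
      Real.hasDerivAt_rpow_const (Or.inl htp.ne')
    have d2 : HasDerivAt (fun s => f s ^ ((N-1)/L)) (f₁ t * ((N-1)/L) * f t ^ ((N-1)/L - 1)) t :=
      (hfD t ht).rpow_const (Or.inl hft.ne')
    have d3 : HasDerivAt (fun s => g s ^ ((N'-1)/L)) (g₁ t * ((N'-1)/L) * g t ^ ((N'-1)/L - 1)) t :=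
      (hgD t ht).rpow_const (Or.inl hgt.ne')
    have dd := (d1.mul d2).mul d3
    have e1 : t ^ (1/L - 1) = t ^ (1/L) / t := by
      rw [Real.rpow_sub htp, Real.rpow_one]
    have e2 : f t ^ ((N-1)/L - 1) = f t ^ ((N-1)/L) / f t := by
      rw [Real.rpow_sub hft, Real.rpow_one]
    have e3 : g t ^ ((N'-1)/L - 1) = g t ^ ((N'-1)/L) / g t := by
      rw [Real.rpow_sub hgt, Real.rpow_one]
    rw [e1, e2, e3] at dd
    have := alg2 (N-1) (N'-1) L t (f t) (f₁ t) (g t) (g₁ t)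
      (t ^ (1/L)) (f t ^ ((N-1)/L)) (g t ^ ((N'-1)/L)) htp.ne' hft.ne' hgt.ne' hLne
    simp only [hPdef, hwdef]
    rw [this]
    exact dd
  -- derivative of P
  have hP' : ∀ t ∈ Ioo (0:ℝ) 1, HasDerivAt P (Pd t) t := by
    intro t ht
    have htI : t ∈ Ioc (0:ℝ) 1 := ⟨ht.1, ht.2.le⟩
    have hft := hfpos t htI
    have hgt := hgpos t htI
    have d0 : HasDerivAt (fun s : ℝ => 1/s) (-(1/t^2)) t := by
      simpa [one_div] using hasDerivAt_inv ht.1.ne'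
    have d2 : HasDerivAt (fun s => f₁ s / f s)
        ((f₂ t * f t - f₁ t * f₁ t) / (f t)^2) t := (hfD₁ t ht).div (hfD t ht) hft.ne'
    have d3 : HasDerivAt (fun s => g₁ s / g s)
        ((g₂ t * g t - g₁ t * g₁ t) / (g t)^2) t := (hgD₁ t ht).div (hgD t ht) hgt.ne'
    exact ((d0.add (d2.const_mul (N-1))).add (d3.const_mul (N'-1))).div_const L
  -- derivative of W and nonnegativity
  have hW' : ∀ t ∈ Ioo (0:ℝ) 1, HasDerivAt W
      (h₂ t * w t + h₁ t * (P t * w t) -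
        (h₁ t * (P t * w t) + h t * (Pd t * w t + P t * (P t * w t)))) t := by
    intro t ht
    exact ((hhD₁ t ht).mul (hw' t ht)).sub ((hhD t ht).mul ((hP' t ht).mul (hw' t ht)))
  have hDnn : ∀ t ∈ Ioo (0:ℝ) 1,
      0 ≤ h₂ t * w t + h₁ t * (P t * w t) -
        (h₁ t * (P t * w t) + h t * (Pd t * w t + P t * (P t * w t))) := by
    intro t ht
    have htI : t ∈ Ioc (0:ℝ) 1 := ⟨ht.1, ht.2.le⟩
    have hft := hfpos t htI
    have hgt := hgpos t htI
    have hht := hhpos t htI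
    have hwt := hwpos t htI
    have ef₂ : f₂ t = -(k t / (N-1) * f t) := by
      have := hfode t (Ioo_subset_Icc_self ht); linarith
    have eg₂ : g₂ t = -(k' t / (N'-1) * g t) := by
      have := hgode t (Ioo_subset_Icc_self ht); linarith
    have eh₂ : h₂ t = -((k t + k' t) / L * h t) := by
      have := hhode t (Ioo_subset_Icc_self ht); linarith
    have key := cs_ineq (N-1) (N'-1) (1/t) (f₁ t / f t) (g₁ t / g t) hα.le hβ.le
    rw [← hLsum] at key
    have eq1 := alg1 (N-1) (N'-1) L t (f t) (f₁ t) (f₂ t) (g t) (g₁ t) (g₂ t)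
      (h t) (h₁ t) (h₂ t) (w t) (k t) (k' t) hα.ne' hβ.ne' hLne ht.1.ne' hft.ne' hgt.ne'
      ef₂ eg₂ eh₂
    simp only [hPdef, hPddef]
    rw [eq1]
    apply mul_nonneg (mul_nonneg hht.le hwt.le)
    apply div_nonneg (by linarith) (by positivity)
  -- continuity
  have cf : ContinuousOn f (Icc 0 1) := fun x hx => (hfd x hx).continuousWithinAt
  have cf₁ : ContinuousOn f₁ (Icc 0 1) := fun x hx => (hfd₁ x hx).continuousWithinAt
  have cg : ContinuousOn g (Icc 0 1) := fun x hx => (hgd x hx).continuousWithinAt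
  have cg₁ : ContinuousOn g₁ (Icc 0 1) := fun x hx => (hgd₁ x hx).continuousWithinAt
  have ch : ContinuousOn h (Icc 0 1) := fun x hx => (hhd x hx).continuousWithinAt
  have ch₁ : ContinuousOn h₁ (Icc 0 1) := fun x hx => (hhd₁ x hx).continuousWithinAt
  have hsub : Ioc (0:ℝ) 1 ⊆ Icc 0 1 := Ioc_subset_Icc_self
  have cP : ContinuousOn P (Ioc 0 1) := by
    rw [hPdef]
    apply ContinuousOn.div_const
    apply ContinuousOn.add
    apply ContinuousOn.add
    · exact continuousOn_const.div continuousOn_id (fun x hx => ne_of_gt hx.1)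
    · exact continuousOn_const.mul ((cf₁.mono hsub).div (cf.mono hsub)
        (fun x hx => (hfpos x hx).ne'))
    · exact continuousOn_const.mul ((cg₁.mono hsub).div (cg.mono hsub)
        (fun x hx => (hgpos x hx).ne'))
  have cw : ContinuousOn w (Ioc 0 1) := by
    rw [hwdef]
    apply ContinuousOn.mul
    apply ContinuousOn.mul
    · exact continuousOn_id.rpow_const (fun x hx => Or.inr (by positivity))
    · exact (cf.mono hsub).rpow_const (fun x hx => Or.inr (by positivity))
    · exact (cg.mono hsub).rpow_const (fun x hx => Or.inr (by positivity))
  have cW : ContinuousOn W (Ioc 0 1) := by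
    rw [hWdef]
    exact ((ch₁.mono hsub).mul cw).sub ((ch.mono hsub).mul (cP.mul cw))
  -- monotonicity of W
  have hWmono : MonotoneOn W (Ioc 0 1) := by
    apply monotoneOn_of_deriv_nonneg (convex_Ioc 0 1) cW
    · intro x hx
      rw [interior_Ioc] at hx
      exact (hW' x hx).differentiableAt.differentiableWithinAt
    · intro x hx
      rw [interior_Ioc] at hx
      rw [(hW' x hx).deriv]
      exact hDnn x hx
  -- positivity of derivatives at 0
  have ha' : 0 < f₁ 0 := by
    apply deriv_pos_at_zero (fun t => k t / (N-1)) f f₁ f₂ (hk.div_const _) hfd hfd₁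
      _ hf0 hf1 hfpos
    intro t ht
    have := hfode t ht; linarith
  have hb' : 0 < g₁ 0 := by
    apply deriv_pos_at_zero (fun t => k' t / (N'-1)) g g₁ g₂ (hk'.div_const _) hgd hgd₁
      _ hg0 hg1 hgpos
    intro t ht
    have := hgode t ht; linarith
  -- limit of W at 0+
  haveI hne : (𝓝[Ioc (0:ℝ) 1] 0).NeBot := by
    rw [nhdsWithin_Ioc_eq_nhdsGT one_pos]; infer_instance
  have hmemIcc : (0:ℝ) ∈ Icc (0:ℝ) 1 := ⟨le_refl 0, zero_le_one⟩
  have sf : Tendsto (fun t => f t / t) (𝓝[Ioc (0:ℝ) 1] 0) (𝓝 (f₁ 0)) :=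
    slope_tendsto f f₁ hfd hf0
  have sg : Tendsto (fun t => g t / t) (𝓝[Ioc (0:ℝ) 1] 0) (𝓝 (g₁ 0)) :=
    slope_tendsto g g₁ hgd hg0
  have hmono : 𝓝[Ioc (0:ℝ) 1] (0:ℝ) ≤ 𝓝[Icc (0:ℝ) 1] 0 := nhdsWithin_mono _ hsub
  have c₁f : Tendsto f₁ (𝓝[Ioc (0:ℝ) 1] 0) (𝓝 (f₁ 0)) :=
    ((hfd₁ 0 hmemIcc).continuousWithinAt).mono_left hmono
  have c₁g : Tendsto g₁ (𝓝[Ioc (0:ℝ) 1] 0) (𝓝 (g₁ 0)) :=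
    ((hgd₁ 0 hmemIcc).continuousWithinAt).mono_left hmono
  have c₁h : Tendsto h₁ (𝓝[Ioc (0:ℝ) 1] 0) (𝓝 (h₁ 0)) :=
    ((hhd₁ 0 hmemIcc).continuousWithinAt).mono_left hmono
  have ch0 : Tendsto h (𝓝[Ioc (0:ℝ) 1] 0) (𝓝 0) := by
    have := ((hhd 0 hmemIcc).continuousWithinAt).mono_left hmono
    rwa [hh0] at this
  have tid : Tendsto (fun t : ℝ => t) (𝓝[Ioc (0:ℝ) 1] 0) (𝓝 0) :=
    tendsto_id.mono_left nhdsWithin_le_nhds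
  have tΦ : Tendsto (fun t => (f t / t) ^ ((N-1)/L) * (g t / t) ^ ((N'-1)/L))
      (𝓝[Ioc (0:ℝ) 1] 0) (𝓝 (f₁ 0 ^ ((N-1)/L) * g₁ 0 ^ ((N'-1)/L))) :=
    (sf.rpow_const (Or.inl ha'.ne')).mul (sg.rpow_const (Or.inl hb'.ne'))
  have tI : Tendsto (fun t => t * h₁ t - h t *
        ((1 + (N-1) * (f₁ t / (f t / t)) + (N'-1) * (g₁ t / (g t / t)))/L))
      (𝓝[Ioc (0:ℝ) 1] 0) (𝓝 0) := by
    have big := (tid.mul c₁h).sub (ch0.mul ((((tendsto_const_nhds (x := (1:ℝ))).add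
      ((c₁f.div sf ha'.ne').const_mul (N-1))).add
      ((c₁g.div sg hb'.ne').const_mul (N'-1))).div_const L))
    simpa using big
  have hWeq : ∀ t ∈ Ioc (0:ℝ) 1, W t =
      ((f t / t) ^ ((N-1)/L) * (g t / t) ^ ((N'-1)/L)) *
      (t * h₁ t - h t *
        ((1 + (N-1) * (f₁ t / (f t / t)) + (N'-1) * (g₁ t / (g t / t)))/L)) := by
    intro t ht
    have htp := ht.1
    have hft := hfpos t ht
    have hgt := hgpos t ht
    have ewt : w t = t * ((f t / t) ^ ((N-1)/L) * (g t / t) ^ ((N'-1)/L)) := by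
      simp only [hwdef]
      have ef : f t ^ ((N-1)/L) = (f t / t) ^ ((N-1)/L) * t ^ ((N-1)/L) := by
        rw [← Real.mul_rpow (by positivity) htp.le, div_mul_cancel₀ _ htp.ne']
      have eg : g t ^ ((N'-1)/L) = (g t / t) ^ ((N'-1)/L) * t ^ ((N'-1)/L) := by
        rw [← Real.mul_rpow (by positivity) htp.le, div_mul_cancel₀ _ htp.ne']
      rw [ef, eg]
      have et : t ^ (1/L) * t ^ ((N-1)/L) * t ^ ((N'-1)/L) = t := by
        rw [← Real.rpow_add htp, ← Real.rpow_add htp, ← add_div, ← add_div,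
          ← hLsum, div_self hLne, Real.rpow_one]
      calc t ^ (1/L) * ((f t / t) ^ ((N-1)/L) * t ^ ((N-1)/L)) *
            ((g t / t) ^ ((N'-1)/L) * t ^ ((N'-1)/L))
          = (t ^ (1/L) * t ^ ((N-1)/L) * t ^ ((N'-1)/L)) *
            ((f t / t) ^ ((N-1)/L) * (g t / t) ^ ((N'-1)/L)) := by ring
        _ = t * ((f t / t) ^ ((N-1)/L) * (g t / t) ^ ((N'-1)/L)) := by rw [et]
    simp only [hWdef, hPdef]
    rw [ewt]
    exact alg3 (N-1) (N'-1) L t (f t) (f₁ t) (g t) (g₁ t) (h t) (h₁ t) _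
      htp.ne' hft.ne' hgt.ne' hLne
  have tW : Tendsto W (𝓝[Ioc (0:ℝ) 1] 0) (𝓝 0) := by
    have := tΦ.mul tI
    rw [mul_zero] at this
    apply this.congr'
    filter_upwards [self_mem_nhdsWithin] with t ht
    exact (hWeq t ht).symm
  -- W nonnegative on Ioc
  have hWnn : ∀ t ∈ Ioc (0:ℝ) 1, 0 ≤ W t := by
    intro t ht
    refine le_of_tendsto tW ?_
    filter_upwards [self_mem_nhdsWithin,
      mem_nhdsWithin_of_mem_nhds (Iio_mem_nhds ht.1)] with s hs1 hs2
    exact hWmono hs1 ht (le_of_lt hs2)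
  -- h ≤ w on Ioc
  have hw1 : w 1 = 1 := by
    simp only [hwdef]
    rw [hf1, hg1]
    simp [Real.one_rpow]
  have hhw : ∀ T ∈ Ioc (0:ℝ) 1, h T ≤ w T := by
    intro T hT
    have hTsub : Icc T 1 ⊆ Ioc (0:ℝ) 1 := fun x hx => ⟨lt_of_lt_of_le hT.1 hx.1, hx.2⟩
    have crT : ContinuousOn (fun t => h t / w t) (Icc T 1) :=
      ((ch.mono (hTsub.trans hsub)).mono (le_refl _)).div (cw.mono hTsub)
        (fun x hx => (hwpos x (hTsub hx)).ne')
    have rmono : MonotoneOn (fun t => h t / w t) (Icc T 1) := by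
      apply monotoneOn_of_deriv_nonneg (convex_Icc T 1) crT
      · intro x hx
        rw [interior_Icc] at hx
        have hxI : x ∈ Ioo (0:ℝ) 1 := ⟨lt_trans hT.1 hx.1, hx.2⟩
        exact (((hhD x hxI).div (hw' x hxI)
          (hwpos x ⟨hxI.1, hxI.2.le⟩).ne')).differentiableAt.differentiableWithinAt
      · intro x hx
        rw [interior_Icc] at hx
        have hxI : x ∈ Ioo (0:ℝ) 1 := ⟨lt_trans hT.1 hx.1, hx.2⟩
        have hwx := hwpos x ⟨hxI.1, hxI.2.le⟩
        have hd := (hhD x hxI).div (hw' x hxI) hwx.ne'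
        rw [show (fun t => h t / w t) = h / w from rfl, hd.deriv]
        apply div_nonneg _ (by positivity)
        exact hWnn x ⟨hxI.1, hxI.2.le⟩
    have h2 : h T / w T ≤ h 1 / w 1 :=
      rmono (left_mem_Icc.mpr hT.2) (right_mem_Icc.mpr hT.2) hT.2
    rw [hh1, hw1] at h2
    norm_num at h2
    exact (div_le_one (hwpos T hT)).mp h2
  -- conclusion
  intro t ht
  rcases eq_or_lt_of_le ht.1 with h0 | h0
  · rw [← h0, hh0, Real.zero_rpow hLne]
    norm_num
  · have htI : t ∈ Ioc (0:ℝ) 1 := ⟨h0, ht.2⟩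
    have hht0 : 0 ≤ h t := (hhpos t htI).le
    have step1 : h t ^ L ≤ w t ^ L := Real.rpow_le_rpow hht0 (hhw t htI) hL.le
    have step2 : w t ^ L = t * f t ^ (N-1) * g t ^ (N'-1) := by
      simp only [hwdef]
      have hft := hfpos t htI
      have hgt := hgpos t htI
      have htp := htI.1
      rw [Real.mul_rpow (by positivity) (by positivity),
        Real.mul_rpow (by positivity) (by positivity),
        ← Real.rpow_mul htp.le, ← Real.rpow_mul hft.le, ← Real.rpow_mul hgt.le,
        one_div_mul_cancel hLne, div_mul_cancel₀ _ hLne, div_mul_cancel₀ _ hLne,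
        Real.rpow_one]
    rw [step2] at step1
    exact step1

/-- Multiplicativity inequality `τ_{k,N}^{(t)}{}^N · τ_{k',N'}^{(t)}{}^{N'} ≥
τ_{k+k',N+N'}^{(t)}{}^{N+N'}` for the modified distortion coefficients
`τ_{k,N}^{(t)} = t^{1/N}·(σ_{k,N−1}^{(t)})^{(N−1)/N}`. -/
theorem modified_distortion_multiplicative
    (k k' : ℝ → ℝ)
    (hk : ContinuousOn k (Icc 0 1)) (hk' : ContinuousOn k' (Icc 0 1))
    (N N' : ℝ) (hN : 1 < N) (hN' : 1 < N')
    (f f₁ f₂ g g₁ g₂ h h₁ h₂ : ℝ → ℝ)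
    (hf : SturmSol (fun t => k t / (N - 1)) f f₁ f₂ (Icc 0 1))
    (hg : SturmSol (fun t => k' t / (N' - 1)) g g₁ g₂ (Icc 0 1))
    (hh : SturmSol (fun t => (k t + k' t) / (N + N' - 1)) h h₁ h₂ (Icc 0 1))
    (hf0 : f 0 = 0) (hf1 : f 1 = 1) (hfpos : ∀ t ∈ Ioc (0:ℝ) 1, 0 < f t)
    (hg0 : g 0 = 0) (hg1 : g 1 = 1) (hgpos : ∀ t ∈ Ioc (0:ℝ) 1, 0 < g t)
    (hh0 : h 0 = 0) (hh1 : h 1 = 1) (hhpos : ∀ t ∈ Ioc (0:ℝ) 1, 0 < h t) :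
    ∀ t ∈ Icc (0:ℝ) 1, h t ^ (N + N' - 1) ≤ t * f t ^ (N - 1) * g t ^ (N' - 1) := by
  obtain ⟨hfd, hfd₁, -, hfode⟩ := hf
  obtain ⟨hgd, hgd₁, -, hgode⟩ := hg
  obtain ⟨hhd, hhd₁, -, hhode⟩ := hh
  exact main_thm k k' hk hk' N N' hN hN' f f₁ f₂ g g₁ g₂ h h₁ h₂
    hfd hfd₁ hfode hgd hgd₁ hgode hhd hhd₁ hhode
    hf0 hf1 hfpos hg0 hg1 hgpos hh0 hh1 hhpos
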